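/- Let B > 0, γ > 0. Let h₁, h₂ ∈ C([0,B]) with 0 ≤ h₁(x) ≤ h₂(x) ≤ γ for all x ∈ [0,B], and let ψ_{b1}, ψ_{b2} : (0,1] → ℝ with 0 ≤ ψ_{b1}(μ) ≤ ψ_{b2}(μ) ≤ γ for all μ ∈ (0,1]. For i = 1, 2 let ψ_i be the solution of μ∂_xψ_i + ψ_i = h_i on [0,B] (C¹ in x for each μ ≠ 0) with ψ_i(0,μ) = ψ_{bi}(μ) and ψ_i(B,μ) = ψ_i(B,−μ) for μ ∈ (0,1]. Then 0 ≤ ψ₁(x,μ) ≤ ψ₂(x,μ) ≤ γ for all x ∈ [0,B] and μ ∈ [-1,1]\{0}. -/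

import Mathlib

open MeasureTheory Set

/-- For fixed `μ ≠ 0`, the function `x ↦ exp(x/μ) * w x` has the expected derivative. -/
lemma expmul_deriv (B μ : ℝ) (hμ : μ ≠ 0) (w w' : ℝ → ℝ)
    (hd : ∀ x ∈ Set.Icc (0:ℝ) B, HasDerivWithinAt w (w' x) (Set.Icc 0 B) x) :
    ∀ x ∈ Set.Icc (0:ℝ) B, HasDerivWithinAt (fun y => Real.exp (y/μ) * w y)
      (Real.exp (x/μ) / μ * (μ * w' x + w x)) (Set.Icc 0 B) x := by
  intro x hx
  have he : HasDerivAt (fun y : ℝ => Real.exp (y/μ)) (Real.exp (x/μ) * (1/μ)) x := by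
    have : HasDerivAt (fun y : ℝ => y/μ) (1/μ) x := (hasDerivAt_id x).div_const μ
    exact this.exp
  have : HasDerivWithinAt (fun y => Real.exp (y/μ) * w y)
      (Real.exp (x/μ) * (1/μ) * w x + Real.exp (x/μ) * w' x) (Set.Icc 0 B) x :=
    (he.hasDerivWithinAt).mul (hd x hx)
  convert this using 1
  field_simp
  ring

/-- Core positivity lemma for a single `μ > 0`. -/
lemma pos_aux_pos (B μ : ℝ) (hμ : 0 < μ) (w w' : ℝ → ℝ)
    (hd : ∀ x ∈ Set.Icc (0:ℝ) B, HasDerivWithinAt w (w' x) (Set.Icc 0 B) x)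
    (hineq : ∀ x ∈ Set.Icc (0:ℝ) B, 0 ≤ μ * w' x + w x)
    (h0 : 0 ≤ w 0) :
    ∀ x ∈ Set.Icc (0:ℝ) B, 0 ≤ w x := by
  intro x hx
  have hμ' : μ ≠ 0 := ne_of_gt hμ
  set F := fun y : ℝ => Real.exp (y/μ) * w y with hF
  have hdF := expmul_deriv B μ hμ' w w' hd
  have hmono : MonotoneOn F (Set.Icc 0 B) := by
    apply monotoneOn_of_hasDerivWithinAt_nonneg (convex_Icc 0 B)
      (f' := fun y => Real.exp (y/μ) / μ * (μ * w' y + w y))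
    · exact fun y hy => (hdF y hy).continuousWithinAt
    · exact fun y hy => ((hdF y (interior_subset hy)).mono interior_subset)
    · intro y hy
      have hy' := interior_subset hy
      exact mul_nonneg (div_nonneg (Real.exp_pos _).le hμ.le) (hineq y hy')
  have h0B : (0:ℝ) ∈ Set.Icc (0:ℝ) B := ⟨le_refl _, hx.1.trans hx.2⟩
  have := hmono h0B hx hx.1
  have hF0 : 0 ≤ F 0 := by
    simp only [hF, zero_div, Real.exp_zero, one_mul]; exact h0
  have hFx : 0 ≤ F x := hF0.trans this
  have := mul_nonneg (Real.exp_pos (-(x/μ))).le hFx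
  have hx' : w x = Real.exp (-(x/μ)) * F x := by
    simp only [hF]; rw [← mul_assoc, ← Real.exp_add]; simp
  rw [hx']; exact this

/-- Core positivity lemma for a single `μ < 0`. -/
lemma pos_aux_neg (B μ : ℝ) (hμ : μ < 0) (w w' : ℝ → ℝ)
    (hd : ∀ x ∈ Set.Icc (0:ℝ) B, HasDerivWithinAt w (w' x) (Set.Icc 0 B) x)
    (hineq : ∀ x ∈ Set.Icc (0:ℝ) B, 0 ≤ μ * w' x + w x)
    (hBpos : 0 ≤ B) (hB0 : 0 ≤ w B) :
    ∀ x ∈ Set.Icc (0:ℝ) B, 0 ≤ w x := by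
  intro x hx
  have hμ' : μ ≠ 0 := ne_of_lt hμ
  set F := fun y : ℝ => Real.exp (y/μ) * w y with hF
  have hdF := expmul_deriv B μ hμ' w w' hd
  have hanti : AntitoneOn F (Set.Icc 0 B) := by
    apply antitoneOn_of_hasDerivWithinAt_nonpos (convex_Icc 0 B)
      (f' := fun y => Real.exp (y/μ) / μ * (μ * w' y + w y))
    · exact fun y hy => (hdF y hy).continuousWithinAt
    · exact fun y hy => ((hdF y (interior_subset hy)).mono interior_subset)
    · intro y hy
      have hy' := interior_subset hy
      exact mul_nonpos_of_nonpos_of_nonneg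
        (div_nonpos_of_nonneg_of_nonpos (Real.exp_pos _).le hμ.le) (hineq y hy')
  have hBB : B ∈ Set.Icc (0:ℝ) B := ⟨hBpos, le_refl _⟩
  have := hanti hx hBB hx.2
  have hFB : 0 ≤ F B := mul_nonneg (Real.exp_pos _).le hB0
  have hFx : 0 ≤ F x := hFB.trans this
  have := mul_nonneg (Real.exp_pos (-(x/μ))).le hFx
  have hx' : w x = Real.exp (-(x/μ)) * F x := by
    simp only [hF]; rw [← mul_assoc, ← Real.exp_add]; simp
  rw [hx']; exact this

/-- Main comparison lemma: a supersolution with nonnegative inflow and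
reflective boundary is nonnegative. -/
lemma key (B : ℝ) (hB : 0 < B) (w w' : ℝ → ℝ → ℝ)
    (hreg : ∀ μ ∈ Set.Icc (-1:ℝ) 1, μ ≠ 0 →
      ∀ x ∈ Set.Icc (0:ℝ) B, HasDerivWithinAt (fun y => w y μ) (w' x μ) (Set.Icc 0 B) x)
    (hineq : ∀ x ∈ Set.Icc (0:ℝ) B, ∀ μ ∈ Set.Icc (-1:ℝ) 1, μ ≠ 0 →
      0 ≤ μ * w' x μ + w x μ)
    (h0 : ∀ μ ∈ Set.Ioc (0:ℝ) 1, 0 ≤ w 0 μ)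
    (hrefl : ∀ μ ∈ Set.Ioc (0:ℝ) 1, w B μ = w B (-μ)) :
    ∀ x ∈ Set.Icc (0:ℝ) B, ∀ μ ∈ Set.Icc (-1:ℝ) 1, μ ≠ 0 → 0 ≤ w x μ := by
  have hpos : ∀ μ ∈ Set.Ioc (0:ℝ) 1, ∀ x ∈ Set.Icc (0:ℝ) B, 0 ≤ w x μ := by
    intro μ hμ x hx
    have hμI : μ ∈ Set.Icc (-1:ℝ) 1 := ⟨by linarith [hμ.1], hμ.2⟩
    exact pos_aux_pos B μ hμ.1 (fun y => w y μ) (fun y => w' y μ)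
      (hreg μ hμI (ne_of_gt hμ.1)) (fun y hy => hineq y hy μ hμI (ne_of_gt hμ.1))
      (h0 μ hμ) x hx
  intro x hx μ hμ hμ0
  rcases lt_or_gt_of_ne hμ0 with hneg | hposμ
  · have hmμ : -μ ∈ Set.Ioc (0:ℝ) 1 := ⟨by linarith, by linarith [hμ.1]⟩
    have hwB : 0 ≤ w B μ := by
      have := hrefl (-μ) hmμ
      rw [neg_neg] at this
      rw [← this]
      exact hpos (-μ) hmμ B ⟨hB.le, le_refl _⟩
    exact pos_aux_neg B μ hneg (fun y => w y μ) (fun y => w' y μ)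
      (hreg μ hμ hμ0) (fun y hy => hineq y hy μ hμ hμ0) hB.le hwB x hx
  · exact hpos μ ⟨hposμ, hμ.2⟩ x hx

/-- Monotonicity of solutions of the linear transport equation
μ∂ₓψ + ψ = h on [0,B] with inflow data at x = 0 and reflective boundary
condition at x = B, with respect to the source term and the inflow datum. -/
theorem stmt_13 (B γ : ℝ) (hB : 0 < B) (hγ : 0 < γ)
    (h₁ h₂ : ℝ → ℝ)
    (hh₁c : ContinuousOn h₁ (Set.Icc 0 B)) (hh₂c : ContinuousOn h₂ (Set.Icc 0 B))
    (hh : ∀ x ∈ Set.Icc (0:ℝ) B, 0 ≤ h₁ x ∧ h₁ x ≤ h₂ x ∧ h₂ x ≤ γ)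
    (ψb₁ ψb₂ : ℝ → ℝ)
    (hψb : ∀ μ ∈ Set.Ioc (0:ℝ) 1, 0 ≤ ψb₁ μ ∧ ψb₁ μ ≤ ψb₂ μ ∧ ψb₂ μ ≤ γ)
    (ψ₁ ψ₁' ψ₂ ψ₂' : ℝ → ℝ → ℝ)
    (hψ₁reg : ∀ μ ∈ Set.Icc (-1:ℝ) 1, μ ≠ 0 →
      (∀ x ∈ Set.Icc (0:ℝ) B, HasDerivWithinAt (fun y => ψ₁ y μ) (ψ₁' x μ) (Set.Icc 0 B) x) ∧
      ContinuousOn (fun x => ψ₁' x μ) (Set.Icc 0 B))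
    (hψ₂reg : ∀ μ ∈ Set.Icc (-1:ℝ) 1, μ ≠ 0 →
      (∀ x ∈ Set.Icc (0:ℝ) B, HasDerivWithinAt (fun y => ψ₂ y μ) (ψ₂' x μ) (Set.Icc 0 B) x) ∧
      ContinuousOn (fun x => ψ₂' x μ) (Set.Icc 0 B))
    (heq₁ : ∀ x ∈ Set.Icc (0:ℝ) B, ∀ μ ∈ Set.Icc (-1:ℝ) 1, μ ≠ 0 →
      μ * ψ₁' x μ + ψ₁ x μ = h₁ x)
    (heq₂ : ∀ x ∈ Set.Icc (0:ℝ) B, ∀ μ ∈ Set.Icc (-1:ℝ) 1, μ ≠ 0 →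
      μ * ψ₂' x μ + ψ₂ x μ = h₂ x)
    (hbd₁ : ∀ μ ∈ Set.Ioc (0:ℝ) 1, ψ₁ 0 μ = ψb₁ μ ∧ ψ₁ B μ = ψ₁ B (-μ))
    (hbd₂ : ∀ μ ∈ Set.Ioc (0:ℝ) 1, ψ₂ 0 μ = ψb₂ μ ∧ ψ₂ B μ = ψ₂ B (-μ)) :
    ∀ x ∈ Set.Icc (0:ℝ) B, ∀ μ ∈ Set.Icc (-1:ℝ) 1, μ ≠ 0 →
      0 ≤ ψ₁ x μ ∧ ψ₁ x μ ≤ ψ₂ x μ ∧ ψ₂ x μ ≤ γ := by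
  have H1 : ∀ x ∈ Set.Icc (0:ℝ) B, ∀ μ ∈ Set.Icc (-1:ℝ) 1, μ ≠ 0 → 0 ≤ ψ₁ x μ := by
    apply key B hB ψ₁ ψ₁'
    · exact fun μ hμ hμ0 => (hψ₁reg μ hμ hμ0).1
    · intro x hx μ hμ hμ0
      rw [heq₁ x hx μ hμ hμ0]; exact (hh x hx).1
    · intro μ hμ; rw [(hbd₁ μ hμ).1]; exact (hψb μ hμ).1
    · exact fun μ hμ => (hbd₁ μ hμ).2
  have H2 : ∀ x ∈ Set.Icc (0:ℝ) B, ∀ μ ∈ Set.Icc (-1:ℝ) 1, μ ≠ 0 →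
      ψ₁ x μ ≤ ψ₂ x μ := by
    have := key B hB (fun x μ => ψ₂ x μ - ψ₁ x μ) (fun x μ => ψ₂' x μ - ψ₁' x μ)
      (by
        intro μ hμ hμ0 x hx
        exact ((hψ₂reg μ hμ hμ0).1 x hx).sub ((hψ₁reg μ hμ hμ0).1 x hx))
      (by
        intro x hx μ hμ hμ0
        have e1 := heq₁ x hx μ hμ hμ0
        have e2 := heq₂ x hx μ hμ hμ0
        have := (hh x hx).2.1
        show 0 ≤ μ * (ψ₂' x μ - ψ₁' x μ) + (ψ₂ x μ - ψ₁ x μ)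
        nlinarith)
      (by
        intro μ hμ
        simp only [(hbd₁ μ hμ).1, (hbd₂ μ hμ).1]
        linarith [(hψb μ hμ).2.1])
      (by
        intro μ hμ
        simp only [(hbd₁ μ hμ).2, (hbd₂ μ hμ).2])
    intro x hx μ hμ hμ0
    have h := this x hx μ hμ hμ0
    simp only [sub_nonneg] at h
    exact h
  have H3 : ∀ x ∈ Set.Icc (0:ℝ) B, ∀ μ ∈ Set.Icc (-1:ℝ) 1, μ ≠ 0 →
      ψ₂ x μ ≤ γ := by
    have := key B hB (fun x μ => γ - ψ₂ x μ) (fun x μ => -ψ₂' x μ)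
      (by
        intro μ hμ hμ0 x hx
        have : HasDerivWithinAt (fun y => γ - ψ₂ y μ) (0 - ψ₂' x μ) (Set.Icc 0 B) x :=
          (hasDerivWithinAt_const x (Set.Icc (0:ℝ) B) γ).sub ((hψ₂reg μ hμ hμ0).1 x hx)
        convert this using 1
        ring)
      (by
        intro x hx μ hμ hμ0
        have e2 := heq₂ x hx μ hμ hμ0
        have := (hh x hx).2.2
        show 0 ≤ μ * (-ψ₂' x μ) + (γ - ψ₂ x μ)
        nlinarith)
      (by
        intro μ hμ
        simp only [(hbd₂ μ hμ).1]
        linarith [(hψb μ hμ).2.2])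
      (by
        intro μ hμ
        simp only [(hbd₂ μ hμ).2])
    intro x hx μ hμ hμ0
    have h := this x hx μ hμ hμ0
    simp only [sub_nonneg] at h
    exact h
  intro x hx μ hμ hμ0
  exact ⟨H1 x hx μ hμ hμ0, H2 x hx μ hμ hμ0, H3 x hx μ hμ hμ0⟩
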